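/- First-order criticality on O(d)^n: if R* ∈ O(d)^n minimizes F(R) = tr(Q Rᵀ R) over O(d)^n (Q ∈ Sym(dn)), and Λ* = SymBlockDiag_d(Q R*ᵀ R*), then (Q − Λ*) R*ᵀ = 0. -/

import Mathlib

open Matrix

/-- The Gram matrix `Rᵀ R ∈ ℝ^{dn×dn}` of a block matrix `R = (R₁ ⋯ Rₙ) ∈ ℝ^{d×dn}`. -/
def gram {d n : ℕ} (R : Fin n → Matrix (Fin d) (Fin d) ℝ) :
    Matrix (Fin n × Fin d) (Fin n × Fin d) ℝ :=
  Matrix.of fun p q => ((R p.1)ᵀ * R q.1) p.2 q.2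

/-- The symmetrized `d×d` block-diagonal of a `dn×dn` matrix. -/
noncomputable def symBlockDiag {d n : ℕ} (M : Matrix (Fin n × Fin d) (Fin n × Fin d) ℝ) :
    Matrix (Fin n × Fin d) (Fin n × Fin d) ℝ :=
  Matrix.of fun p q => if p.1 = q.1 then (M p q + M q p) / 2 else 0

/-- The transpose `Rᵀ ∈ ℝ^{dn×d}` of a block matrix `R = (R₁ ⋯ Rₙ) ∈ ℝ^{d×dn}`. -/
def blockTranspose {d n : ℕ} (R : Fin n → Matrix (Fin d) (Fin d) ℝ) :
    Matrix (Fin n × Fin d) (Fin d) ℝ :=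
  Matrix.of fun p c => R p.1 c p.2

namespace FOC

variable {d n : ℕ}

/-- projector onto coords a,b -/
noncomputable def Pab (a b : Fin d) : Matrix (Fin d) (Fin d) ℝ :=
  single a a 1 + single b b 1

noncomputable def Kab (a b : Fin d) : Matrix (Fin d) (Fin d) ℝ :=
  single b a 1 - single a b 1

noncomputable def giv (a b : Fin d) (θ : ℝ) : Matrix (Fin d) (Fin d) ℝ :=
  1 + (Real.cos θ - 1) • Pab a b + Real.sin θ • Kab a b

lemma Pab_transpose (a b : Fin d) : (Pab a b)ᵀ = Pab a b := by
  ext x y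
  simp [Pab, single, transpose_apply, and_comm]

lemma Kab_transpose (a b : Fin d) : (Kab a b)ᵀ = -Kab a b := by
  ext x y
  simp [Kab, single, transpose_apply, and_comm]

lemma Pab_mul_Pab {a b : Fin d} (hab : a ≠ b) : Pab a b * Pab a b = Pab a b := by
  simp [Pab, add_mul, mul_add, single_mul_single_same, single_mul_single_of_ne, hab, hab.symm]

lemma Kab_mul_Kab {a b : Fin d} (hab : a ≠ b) : Kab a b * Kab a b = -Pab a b := by
  simp only [Pab, Kab, sub_mul, mul_sub, single_mul_single_same, one_mul,
    single_mul_single_of_ne, ne_eq, hab, hab.symm, not_false_eq_true]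
  abel

lemma Pab_mul_Kab {a b : Fin d} (hab : a ≠ b) : Pab a b * Kab a b = Kab a b := by
  simp only [Pab, Kab, add_mul, mul_sub, single_mul_single_same, one_mul,
    single_mul_single_of_ne, ne_eq, hab, hab.symm, not_false_eq_true]
  abel

lemma Kab_mul_Pab {a b : Fin d} (hab : a ≠ b) : Kab a b * Pab a b = Kab a b := by
  simp only [Pab, Kab, sub_mul, mul_add, single_mul_single_same, one_mul,
    single_mul_single_of_ne, ne_eq, hab, hab.symm, not_false_eq_true]
  abel

lemma giv_transpose (a b : Fin d) (θ : ℝ) :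
    (giv a b θ)ᵀ = 1 + (Real.cos θ - 1) • Pab a b - Real.sin θ • Kab a b := by
  simp [giv, transpose_add, transpose_smul, Pab_transpose, Kab_transpose, sub_eq_add_neg]

lemma giv_orth {a b : Fin d} (hab : a ≠ b) (θ : ℝ) :
    (giv a b θ)ᵀ * giv a b θ = 1 := by
  rw [giv_transpose, giv]
  set c := Real.cos θ - 1 with hc
  set s := Real.sin θ with hs
  have expand : (1 + c • Pab a b - s • Kab a b) * (1 + c • Pab a b + s • Kab a b)
      = 1 + (2*c + c*c + s*s) • Pab a b := by
    simp only [mul_add, add_mul, sub_mul, mul_sub, one_mul, mul_one,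
      smul_mul_assoc, mul_smul_comm, smul_smul, Pab_mul_Pab hab, Kab_mul_Kab hab,
      Pab_mul_Kab hab, Kab_mul_Pab hab]
    module
  rw [expand]
  have : 2*c + c*c + s*s = 0 := by
    have := Real.sin_sq_add_cos_sq θ
    rw [hc, hs]; nlinarith [this]
  rw [this, zero_smul, add_zero]

/-- injection of block `i` -/
def inj (d n : ℕ) (i : Fin n) : Matrix (Fin n × Fin d) (Fin d) ℝ :=
  Matrix.of fun p y => if p.1 = i ∧ p.2 = y then 1 else 0

lemma injT_mul {m' : Type*} [Fintype m'] (i : Fin n) (M : Matrix (Fin n × Fin d) m' ℝ) :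
    (inj d n i)ᵀ * M = Matrix.of fun y c => M (i, y) c := by
  ext y c
  simp only [mul_apply, transpose_apply, inj, Matrix.of_apply]
  rw [Fintype.sum_prod_type]
  simp [ite_and, Finset.sum_ite_eq', Finset.sum_ite_eq]

lemma mul_inj {m' : Type*} [Fintype m'] (i : Fin n) (M : Matrix m' (Fin n × Fin d) ℝ) :
    M * inj d n i = Matrix.of fun r y => M r (i, y) := by
  ext r y
  simp only [mul_apply, inj, Matrix.of_apply]
  rw [Fintype.sum_prod_type]
  simp [ite_and, Finset.sum_ite_eq', Finset.sum_ite_eq]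

lemma inj_mul {m' : Type*} [Fintype m'] (i : Fin n) (M : Matrix (Fin d) m' ℝ) :
    inj d n i * M = Matrix.of fun p c => if p.1 = i then M p.2 c else 0 := by
  ext p c
  simp only [mul_apply, inj, Matrix.of_apply, ite_and, boole_mul]
  by_cases h : p.1 = i <;> simp [h, Finset.sum_ite_eq]

lemma injT_blockT (i : Fin n) (R : Fin n → Matrix (Fin d) (Fin d) ℝ) :
    (inj d n i)ᵀ * blockTranspose R = (R i)ᵀ := by
  rw [injT_mul]
  ext y c
  simp [blockTranspose, transpose_apply]

lemma gram_eq (R : Fin n → Matrix (Fin d) (Fin d) ℝ) :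
    gram R = blockTranspose R * (blockTranspose R)ᵀ := by
  ext p q
  simp [_root_.gram, blockTranspose, mul_apply, transpose_apply]

lemma blockT_update (i : Fin n) (R : Fin n → Matrix (Fin d) (Fin d) ℝ)
    (E : Matrix (Fin d) (Fin d) ℝ) :
    blockTranspose (Function.update R i (R i * E))
      = blockTranspose R + inj d n i * ((Eᵀ - 1) * (R i)ᵀ) := by
  rw [inj_mul]
  ext p c
  rcases p with ⟨j, x⟩
  by_cases h : j = i
  · subst h
    simp only [blockTranspose, Matrix.of_apply, Function.update_self, Matrix.add_apply,
      Function.update_apply, if_pos rfl]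
    simp only [mul_apply, Matrix.sub_apply, transpose_apply, one_apply, sub_mul]
    rw [Finset.sum_sub_distrib]
    simp [Finset.sum_ite_eq, mul_comm]
    rw [mul_apply]
  · simp [blockTranspose, Function.update_apply, h]

/-- the i-th diagonal block of `Q * gram R` -/
def Dmat (Q : Matrix (Fin n × Fin d) (Fin n × Fin d) ℝ)
    (R : Fin n → Matrix (Fin d) (Fin d) ℝ) (i : Fin n) : Matrix (Fin d) (Fin d) ℝ :=
  Matrix.of fun x y => (Q * gram R) (i, x) (i, y)

lemma key (Q : Matrix (Fin n × Fin d) (Fin n × Fin d) ℝ)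
    (R : Fin n → Matrix (Fin d) (Fin d) ℝ) (hR : ∀ i, (R i)ᵀ * R i = 1) (i : Fin n) :
    (inj d n i)ᵀ * Q * blockTranspose R = Dmat Q R i * (R i)ᵀ := by
  have hXJ : (blockTranspose R)ᵀ * inj d n i = R i := by
    have := congrArg Matrix.transpose (injT_blockT i R)
    simpa [transpose_mul] using this
  have h1 : (inj d n i)ᵀ * Q * blockTranspose R * R i = Dmat Q R i := by
    rw [← hXJ, ← Matrix.mul_assoc, Matrix.mul_assoc ((inj d n i)ᵀ * Q),
      ← gram_eq, Matrix.mul_assoc, mul_inj, Matrix.mul_assoc, injT_mul]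
    ext x y
    simp [Dmat, mul_apply]
  have hRRt : R i * (R i)ᵀ = 1 := mul_eq_one_comm.mp (hR i)
  calc (inj d n i)ᵀ * Q * blockTranspose R
      = (inj d n i)ᵀ * Q * blockTranspose R * (R i * (R i)ᵀ) := by rw [hRRt, Matrix.mul_one]
    _ = ((inj d n i)ᵀ * Q * blockTranspose R * R i) * (R i)ᵀ := by
        simp only [Matrix.mul_assoc]
    _ = Dmat Q R i * (R i)ᵀ := by rw [h1]

lemma trace_mul_std (D : Matrix (Fin d) (Fin d) ℝ) (p q : Fin d) :
    (D * single p q (1:ℝ)).trace = D q p := by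
  simp only [Matrix.trace, Matrix.diag, mul_apply, single, Matrix.of_apply,
    mul_ite, mul_one, mul_zero, ite_and]
  rw [Finset.sum_comm]
  simp [Finset.sum_ite_eq, Finset.sum_ite_eq']

lemma trace_mul_Pab (D : Matrix (Fin d) (Fin d) ℝ) (a b : Fin d) :
    (D * Pab a b).trace = D a a + D b b := by
  simp [Pab, Matrix.mul_add, trace_mul_std]

lemma trace_mul_Kab (D : Matrix (Fin d) (Fin d) ℝ) (a b : Fin d) :
    (D * Kab a b).trace = D a b - D b a := by
  simp [Kab, Matrix.mul_sub, trace_mul_std]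

lemma trace_update (Q : Matrix (Fin n × Fin d) (Fin n × Fin d) ℝ) (hQ : Q.IsSymm)
    (R : Fin n → Matrix (Fin d) (Fin d) ℝ) (hR : ∀ i, (R i)ᵀ * R i = 1)
    (i : Fin n) {a b : Fin d} (hab : a ≠ b) :
    ∃ A : ℝ, ∀ θ : ℝ,
      (Q * gram (Function.update R i (R i * giv a b θ))).trace
        = (Q * gram R).trace + (Real.cos θ - 1) * A
            + Real.sin θ * (2 * (Dmat Q R i * Kab a b).trace) := by
  set X := blockTranspose R with hX
  set J := inj d n i with hJ
  set D := Dmat Q R i with hD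
  refine ⟨2 * (D * Pab a b).trace - 2 * ((Jᵀ * Q * J) * Pab a b).trace, fun θ => ?_⟩
  set c := Real.cos θ - 1 with hc
  set s := Real.sin θ with hs
  set M := (giv a b θ)ᵀ - 1 with hM
  have hMval : M = c • Pab a b - s • Kab a b := by
    rw [hM, giv_transpose]; abel
  have hMt : Mᵀ = c • Pab a b + s • Kab a b := by
    rw [hMval]
    simp [transpose_sub, transpose_smul, Pab_transpose, Kab_transpose, sub_eq_add_neg]
  have hMMt : M * Mᵀ = (c * c + s * s) • Pab a b := by
    rw [hMt, hMval]
    simp only [sub_mul, mul_add, smul_mul_assoc, mul_smul_comm, smul_smul,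
      Pab_mul_Pab hab, Kab_mul_Kab hab, Pab_mul_Kab hab, Kab_mul_Pab hab]
    module
  have hQt : Qᵀ = Q := hQ
  have hkey : Jᵀ * Q * X = D * (R i)ᵀ := key Q R hR i
  have hkeyT : Xᵀ * Q * J = R i * Dᵀ := by
    have := congrArg Matrix.transpose hkey
    simpa [transpose_mul, Matrix.mul_assoc, hQt] using this
  -- the updated block transpose
  have hX' : blockTranspose (Function.update R i (R i * giv a b θ))
      = X + J * (M * (R i)ᵀ) := by
    rw [blockT_update, hM]
  -- expand the gram matrix
  have h5 : (R i)ᵀ * (R i * (Mᵀ * Jᵀ)) = Mᵀ * Jᵀ := by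
    rw [← Matrix.mul_assoc, hR i, Matrix.one_mul]
  have h4 : J * (M * (R i)ᵀ) * (R i * Mᵀ * Jᵀ) = J * (M * Mᵀ) * Jᵀ := by
    simp only [Matrix.mul_assoc]
    rw [h5]
  have hgram : gram (Function.update R i (R i * giv a b θ))
      = X * Xᵀ + X * (R i * Mᵀ * Jᵀ) + J * (M * (R i)ᵀ) * Xᵀ + J * (M * Mᵀ) * Jᵀ := by
    rw [gram_eq, hX']
    have hYt : (J * (M * (R i)ᵀ))ᵀ = R i * Mᵀ * Jᵀ := by
      simp [transpose_mul, Matrix.mul_assoc]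
    rw [transpose_add, hYt, Matrix.add_mul, Matrix.mul_add, Matrix.mul_add, h4]
    abel
  have hT2 : (Q * (X * (R i * Mᵀ * Jᵀ))).trace = (D * Mᵀ).trace := by
    have e1 : Q * (X * (R i * Mᵀ * Jᵀ)) = (Q * (X * (R i * Mᵀ))) * Jᵀ := by
      simp only [Matrix.mul_assoc]
    rw [e1, Matrix.trace_mul_comm]
    have e2 : Jᵀ * (Q * (X * (R i * Mᵀ))) = ((Jᵀ * Q * X) * R i) * Mᵀ := by
      simp only [Matrix.mul_assoc]
    rw [e2, hkey]
    have e3 : D * (R i)ᵀ * R i * Mᵀ = D * (((R i)ᵀ * R i) * Mᵀ) := by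
      simp only [Matrix.mul_assoc]
    rw [e3, hR i, Matrix.one_mul]
  have hT3 : (Q * (J * (M * (R i)ᵀ) * Xᵀ)).trace = (D * Mᵀ).trace := by
    have e1 : Q * (J * (M * (R i)ᵀ) * Xᵀ) = (Q * (J * (M * (R i)ᵀ))) * Xᵀ := by
      simp only [Matrix.mul_assoc]
    rw [e1, Matrix.trace_mul_comm]
    have e2 : Xᵀ * (Q * (J * (M * (R i)ᵀ))) = (Xᵀ * Q * J) * (M * (R i)ᵀ) := by
      simp only [Matrix.mul_assoc]
    rw [e2, hkeyT, Matrix.trace_mul_comm]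
    have e3 : (M * (R i)ᵀ) * (R i * Dᵀ) = M * (((R i)ᵀ * R i) * Dᵀ) := by
      simp only [Matrix.mul_assoc]
    rw [e3, hR i, Matrix.one_mul]
    have e4 : M * Dᵀ = (D * Mᵀ)ᵀ := by simp [transpose_mul]
    rw [e4, Matrix.trace_transpose]
  have hT4 : (Q * (J * (M * Mᵀ) * Jᵀ)).trace
      = (c * c + s * s) * ((Jᵀ * Q * J) * Pab a b).trace := by
    have e1 : Q * (J * (M * Mᵀ) * Jᵀ) = (Q * (J * (M * Mᵀ))) * Jᵀ := by
      simp only [Matrix.mul_assoc]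
    rw [e1, Matrix.trace_mul_comm]
    have e2 : Jᵀ * (Q * (J * (M * Mᵀ))) = (Jᵀ * Q * J) * (M * Mᵀ) := by
      simp only [Matrix.mul_assoc]
    rw [e2, hMMt, Matrix.mul_smul, Matrix.trace_smul, smul_eq_mul]
  have hDMt : (D * Mᵀ).trace
      = c * (D * Pab a b).trace + s * (D * Kab a b).trace := by
    rw [hMt, Matrix.mul_add, Matrix.trace_add, Matrix.mul_smul, Matrix.mul_smul,
      Matrix.trace_smul, Matrix.trace_smul, smul_eq_mul, smul_eq_mul]
  have hcs : c * c + s * s = -2 * c := by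
    have := Real.sin_sq_add_cos_sq θ
    rw [hc, hs]; nlinarith [this]
  rw [hgram, Matrix.mul_add, Matrix.mul_add, Matrix.mul_add, Matrix.trace_add, Matrix.trace_add,
    Matrix.trace_add, hT2, hT3, hT4, ← gram_eq, hDMt, hcs]
  ring

lemma update_orth (R : Fin n → Matrix (Fin d) (Fin d) ℝ) (hR : ∀ i, (R i)ᵀ * R i = 1)
    (i : Fin n) {a b : Fin d} (hab : a ≠ b) (θ : ℝ) (j : Fin n) :
    ((Function.update R i (R i * giv a b θ)) j)ᵀ * (Function.update R i (R i * giv a b θ)) j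
      = 1 := by
  rcases eq_or_ne j i with rfl | h
  · rw [Function.update_self, transpose_mul, Matrix.mul_assoc]
    have e : (R j)ᵀ * (R j * giv a b θ) = giv a b θ := by
      rw [← Matrix.mul_assoc, hR j, Matrix.one_mul]
    rw [e, giv_orth hab]
  · rw [Function.update_of_ne h, hR j]

lemma coeff_eq_zero {A B : ℝ}
    (h : ∀ θ : ℝ, 0 ≤ (Real.cos θ - 1) * A + Real.sin θ * B) : B = 0 := by
  have hf : HasDerivAt (fun θ : ℝ => (Real.cos θ - 1) * A + Real.sin θ * B) B 0 := by
    have h1 : HasDerivAt (fun θ : ℝ => (Real.cos θ - 1) * A) (-Real.sin 0 * A) 0 :=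
      ((Real.hasDerivAt_cos 0).sub_const 1).mul_const A
    have h2 : HasDerivAt (fun θ : ℝ => Real.sin θ * B) (Real.cos 0 * B) 0 :=
      (Real.hasDerivAt_sin 0).mul_const B
    simpa [Pi.add_def] using h1.add h2
  have hmin : IsLocalMin (fun θ : ℝ => (Real.cos θ - 1) * A + Real.sin θ * B) 0 := by
    apply Filter.Eventually.of_forall
    intro θ
    simpa using h θ
  exact hmin.hasDerivAt_eq_zero hf

lemma diag_symm (Q : Matrix (Fin n × Fin d) (Fin n × Fin d) ℝ) (hQ : Q.IsSymm)
    (R : Fin n → Matrix (Fin d) (Fin d) ℝ) (hR : ∀ i, (R i)ᵀ * R i = 1)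
    (hmin : ∀ R' : Fin n → Matrix (Fin d) (Fin d) ℝ,
      (∀ i, (R' i)ᵀ * R' i = 1) → (Q * gram R).trace ≤ (Q * gram R').trace)
    (i : Fin n) (x y : Fin d) :
    (Q * gram R) (i, x) (i, y) = (Q * gram R) (i, y) (i, x) := by
  rcases eq_or_ne x y with rfl | hxy
  · rfl
  obtain ⟨A, hA⟩ := trace_update Q hQ R hR i hxy
  have hB : 2 * (Dmat Q R i * Kab x y).trace = 0 := by
    apply coeff_eq_zero (A := A)
    intro θ
    have h1 := hmin _ (update_orth R hR i hxy θ)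
    rw [hA θ] at h1
    linarith
  rw [trace_mul_Kab] at hB
  have : Dmat Q R i x y = Dmat Q R i y x := by linarith
  simpa [Dmat] using this

lemma injT_symBlockDiag_mul (Q : Matrix (Fin n × Fin d) (Fin n × Fin d) ℝ)
    (R : Fin n → Matrix (Fin d) (Fin d) ℝ) (i : Fin n)
    (hsym : ∀ x y, (Q * gram R) (i, x) (i, y) = (Q * gram R) (i, y) (i, x)) :
    (inj d n i)ᵀ * (symBlockDiag (Q * gram R) * blockTranspose R)
      = Dmat Q R i * (R i)ᵀ := by
  rw [injT_mul]
  ext x c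
  simp only [Matrix.of_apply, mul_apply, transpose_apply, symBlockDiag, blockTranspose,
    Dmat]
  rw [Fintype.sum_prod_type]
  simp only [Matrix.of_apply]
  rw [Finset.sum_eq_single i]
  · apply Finset.sum_congr rfl
    intro y _
    rw [if_pos rfl]
    have hxy := hsym x y
    rw [mul_apply, mul_apply] at hxy
    rw [← hxy]
    ring
  · intro k _ hk
    apply Finset.sum_eq_zero
    intro y _
    rw [if_neg (Ne.symm hk), zero_mul]
  · intro hi
    exact absurd (Finset.mem_univ i) hi

end FOC

open FOC in
/-- First-order criticality: if `R*` minimizes `tr(Q Rᵀ R)` over `O(d)^n` and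
`Λ* = SymBlockDiag_d(Q R*ᵀ R*)`, then `(Q − Λ*) R*ᵀ = 0`. -/
theorem first_order_criticality {d n : ℕ}
    (Q : Matrix (Fin n × Fin d) (Fin n × Fin d) ℝ) (hQ : Q.IsSymm)
    (R : Fin n → Matrix (Fin d) (Fin d) ℝ)
    (hR : ∀ i, (R i)ᵀ * R i = 1)
    (hmin : ∀ R' : Fin n → Matrix (Fin d) (Fin d) ℝ,
      (∀ i, (R' i)ᵀ * R' i = 1) → (Q * gram R).trace ≤ (Q * gram R').trace) :
    (Q - symBlockDiag (Q * gram R)) * blockTranspose R = 0 := by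
  ext ⟨i, x⟩ c
  have hblock : (inj d n i)ᵀ * ((Q - symBlockDiag (Q * gram R)) * blockTranspose R) = 0 := by
    rw [Matrix.sub_mul, Matrix.mul_sub, ← Matrix.mul_assoc, key Q R hR i,
      injT_symBlockDiag_mul Q R i (diag_symm Q hQ R hR hmin i), sub_self]
  have h2 : ((Q - symBlockDiag (Q * gram R)) * blockTranspose R) (i, x) c
      = ((inj d n i)ᵀ * ((Q - symBlockDiag (Q * gram R)) * blockTranspose R)) x c := by
    rw [injT_mul, Matrix.of_apply]
  rw [h2, hblock]
  simp
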